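/- Let m be an integer with 5 ≤ m ≤ 18 and set V(ρ) = (1 − ρ²)^m for ρ ∈ [0,1]. Then ∫_{B^m} ( V''(r) + (m−1)V'(r)/r + 2(m−4)V(r)/r² )² dx − 5(m−1)(m+11) ∫_{B^m} V(r)²/r⁴ dx < 0, where r = r(x) = |x| and B^m is the open unit ball in ℝ^m. (This quantity is the second variation of the bienergy at the proper biharmonic map ṽ of Theorem 1.3 in the direction determined by V, so ṽ is an unstable critical point of the bienergy.) -/

import Mathlib

noncomputable section

open Real MeasureTheory

/-- The test function `V(ρ) = (1 − ρ²)^m`. -/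
def Vtest (m : ℕ) (ρ : ℝ) : ℝ := (1 - ρ ^ 2) ^ m

namespace Stmt19Aux

/-- `Jr a b = ∫₀¹ ρ^a (1-ρ²)^b dρ`. -/
def Jr : ℕ → ℕ → ℝ
  | a, 0 => 1 / ((a : ℝ) + 1)
  | a, b + 1 => (2 * ((b : ℝ) + 1)) / ((a : ℝ) + 1) * Jr (a + 2) b

lemma contF (a b : ℕ) : Continuous fun ρ : ℝ => ρ ^ a * (1 - ρ ^ 2) ^ b := by
  fun_prop

lemma intOn (a b : ℕ) :
    IntegrableOn (fun ρ : ℝ => ρ ^ a * (1 - ρ ^ 2) ^ b) (Set.Ioo (0:ℝ) 1) := by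
  exact ((contF a b).integrableOn_Icc (a := (0:ℝ)) (b := 1)).mono_set Set.Ioo_subset_Icc_self

/-- coefficients of `Q(ρ)²` as a polynomial in `ρ²`. -/
def qc (K : ℝ) : ℕ → ℝ
  | 0 => 4 + 8*K + 4*K^2
  | 1 => -(216 + 312*K + 104*K^2 + 8*K^3)
  | 2 => 3444 + 3352*K + 1048*K^2 + 120*K^3 + 4*K^4
  | 3 => -(14256 + 12600*K + 3960*K^2 + 520*K^3 + 24*K^4)
  | 4 => 17424 + 15312*K + 4948*K^2 + 696*K^3 + 36*K^4
  | _ => 0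

lemma hasDerivAt_u_pow (b : ℕ) (ρ : ℝ) :
    HasDerivAt (fun ρ : ℝ => (1 - ρ ^ 2) ^ b) (((b : ℝ)) * (1 - ρ ^ 2) ^ (b - 1) * (-(2 * ρ))) ρ := by
  have hu : HasDerivAt (fun ρ : ℝ => 1 - ρ ^ 2) (-(2 * ρ)) ρ := by
    simpa using ((hasDerivAt_pow 2 ρ).const_sub 1)
  simpa using hu.fun_pow b

lemma Jval : ∀ (b a : ℕ), (∫ ρ in Set.Ioo (0:ℝ) 1, ρ ^ a * (1 - ρ ^ 2) ^ b) = Jr a b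
  | 0, a => by
    simp only [pow_zero, mul_one, Jr]
    rw [← integral_Ioc_eq_integral_Ioo, ← intervalIntegral.integral_of_le (zero_le_one)]
    rw [integral_pow]
    norm_num
  | (b+1), a => by
    have ha : ((a : ℝ) + 1) ≠ 0 := by positivity
    have hd : ∀ ρ : ℝ, HasDerivAt (fun ρ : ℝ => ρ ^ (a+1) * (1 - ρ ^ 2) ^ (b+1))
        (((a:ℝ)+1) * (ρ ^ a * (1 - ρ ^ 2) ^ (b+1))
          - (2*((b:ℝ)+1)) * (ρ ^ (a+2) * (1 - ρ ^ 2) ^ b)) ρ := by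
      intro ρ
      have h1 : HasDerivAt (fun ρ : ℝ => ρ ^ (a+1)) (((a:ℝ)+1) * ρ ^ a) ρ := by
        simpa using hasDerivAt_pow (a+1) ρ
      have h2 := hasDerivAt_u_pow (b+1) ρ
      simp only [Nat.add_sub_cancel] at h2
      refine (h1.fun_mul h2).congr_deriv ?_
      push_cast
      ring
    have hcont : Continuous fun ρ : ℝ =>
        ((a:ℝ)+1) * (ρ ^ a * (1 - ρ ^ 2) ^ (b+1))
          - (2*((b:ℝ)+1)) * (ρ ^ (a+2) * (1 - ρ ^ 2) ^ b) := by fun_prop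
    have key := intervalIntegral.integral_eq_sub_of_hasDerivAt
      (f := fun ρ : ℝ => ρ ^ (a+1) * (1 - ρ ^ 2) ^ (b+1)) (a := (0:ℝ)) (b := (1:ℝ))
      (fun ρ _ => hd ρ) (hcont.intervalIntegrable 0 1)
    rw [intervalIntegral.integral_of_le zero_le_one, integral_Ioc_eq_integral_Ioo] at key
    norm_num at key
    rw [integral_sub ((intOn a (b+1)).const_mul _) ((intOn (a+2) b).const_mul _),
      integral_const_mul, integral_const_mul, Jval b (a+2), sub_eq_zero] at key
    simp only [Jr]
    field_simp
    linear_combination key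

lemma dV (m n : ℕ) (h : m = n + 1) :
    deriv (Vtest m) = fun ρ : ℝ => (-2 * ((n:ℝ)+1)) * ρ * (1 - ρ ^ 2) ^ n := by
  subst h
  funext ρ
  have h1 := hasDerivAt_u_pow (n+1) ρ
  simp only [Nat.add_sub_cancel] at h1
  have h2 : HasDerivAt (Vtest (n+1)) (((n+1:ℕ):ℝ) * (1 - ρ ^ 2) ^ n * (-(2*ρ))) ρ := h1
  rw [h2.deriv]
  push_cast
  ring

lemma ddV (m n : ℕ) (h : m = n + 2) (ρ : ℝ) :
    deriv (deriv (Vtest m)) ρ =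
      (-2*((n:ℝ)+2)) * (1 - ρ ^ 2) ^ (n+1)
        + (-2*((n:ℝ)+2)) * ρ * (((n:ℝ)+1) * (1 - ρ ^ 2) ^ n * (-(2*ρ))) := by
  subst h
  rw [dV (n+2) (n+1) rfl]
  have h1 : HasDerivAt (fun ρ : ℝ => (-2 * (((n+1:ℕ):ℝ)+1)) * ρ * (1 - ρ ^ 2) ^ (n+1))
      ((-2 * (((n+1:ℕ):ℝ)+1)) * 1 * (1 - ρ ^ 2) ^ (n+1)
        + (-2 * (((n+1:ℕ):ℝ)+1)) * ρ * (((n:ℝ)+1) * (1 - ρ ^ 2) ^ n * (-(2*ρ)))) ρ := by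
    have hu := hasDerivAt_u_pow (n+1) ρ
    simp only [Nat.add_sub_cancel] at hu
    have hl : HasDerivAt (fun ρ : ℝ => (-2 * (((n+1:ℕ):ℝ)+1)) * ρ) (-2 * (((n+1:ℕ):ℝ)+1)) ρ := by
      simpa using (hasDerivAt_id ρ).const_mul (-2 * (((n+1:ℕ):ℝ)+1))
    have := hl.fun_mul hu
    refine this.congr_deriv ?_
    push_cast
    ring
  rw [h1.deriv]
  push_cast
  ring

lemma ball_int (m : ℕ) (hm : 1 ≤ m) (g : ℝ → ℝ) :
    (∫ x in Metric.ball (0 : EuclideanSpace ℝ (Fin m)) 1, g ‖x‖) =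
      (m : ℝ) * (volume (Metric.ball (0 : EuclideanSpace ℝ (Fin m)) 1)).toReal *
        ∫ ρ in Set.Ioo (0:ℝ) 1, ρ ^ (m - 1) * g ρ := by
  haveI : Nontrivial (EuclideanSpace ℝ (Fin m)) := by
    apply Module.nontrivial_of_finrank_pos (R := ℝ)
    rw [finrank_euclideanSpace_fin]
    omega
  have h1 : (∫ x in Metric.ball (0 : EuclideanSpace ℝ (Fin m)) 1, g ‖x‖) =
      ∫ x : EuclideanSpace ℝ (Fin m), Set.indicator (Set.Iio (1:ℝ)) g ‖x‖ := by
    rw [← integral_indicator measurableSet_ball]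
    congr 1
    funext x
    by_cases h : ‖x‖ < 1
    · simp [Set.indicator, h, mem_ball_zero_iff]
    · simp [Set.indicator, h, mem_ball_zero_iff]
  rw [h1, integral_fun_norm_addHaar volume (Set.indicator (Set.Iio (1:ℝ)) g)]
  rw [finrank_euclideanSpace_fin, nsmul_eq_mul, smul_eq_mul]
  have h2 : (∫ y in Set.Ioi (0:ℝ), y ^ (m-1) • Set.indicator (Set.Iio (1:ℝ)) g y) =
      ∫ ρ in Set.Ioo (0:ℝ) 1, ρ ^ (m-1) * g ρ := by
    have hy : ∀ y : ℝ, y ^ (m-1) • Set.indicator (Set.Iio (1:ℝ)) g y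
        = Set.indicator (Set.Iio (1:ℝ)) (fun ρ => ρ ^ (m-1) * g ρ) y := by
      intro y
      by_cases h : y ∈ Set.Iio (1:ℝ) <;> simp [Set.indicator, h]
    simp_rw [hy]
    rw [setIntegral_indicator measurableSet_Iio, Set.Ioi_inter_Iio]
  rw [h2]
  simp only [measureReal_def]
  ring

end Stmt19Aux

set_option maxHeartbeats 4000000 in
open Stmt19Aux in
theorem stmt19 (m : ℕ) (hm : 5 ≤ m) (hm' : m ≤ 18) :
    (∫ x in Metric.ball (0 : EuclideanSpace ℝ (Fin m)) 1,
        (deriv (deriv (Vtest m)) ‖x‖ + ((m : ℝ) - 1) * deriv (Vtest m) ‖x‖ / ‖x‖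
          + 2 * ((m : ℝ) - 4) * Vtest m ‖x‖ / ‖x‖ ^ 2) ^ 2)
      - 5 * ((m : ℝ) - 1) * ((m : ℝ) + 11) *
        (∫ x in Metric.ball (0 : EuclideanSpace ℝ (Fin m)) 1,
          (Vtest m ‖x‖) ^ 2 / ‖x‖ ^ 4) < 0 := by
  obtain ⟨k, rfl⟩ : ∃ k, m = k + 5 := ⟨m - 5, by omega⟩
  have h1 := ball_int (k+5) (by omega) (fun ρ => (deriv (deriv (Vtest (k+5))) ρ
      + (((k+5:ℕ) : ℝ) - 1) * deriv (Vtest (k+5)) ρ / ρ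
      + 2 * (((k+5:ℕ) : ℝ) - 4) * Vtest (k+5) ρ / ρ ^ 2) ^ 2)
  have h2 := ball_int (k+5) (by omega) (fun ρ => (Vtest (k+5) ρ) ^ 2 / ρ ^ 4)
  simp only [show k+5-1 = k+4 from rfl] at h1 h2
  rw [h1, h2]
  set C : ℝ := ((k+5 : ℕ) : ℝ) *
    (volume (Metric.ball (0 : EuclideanSpace ℝ (Fin (k+5))) 1)).toReal with hC
  set K : ℝ := (k : ℝ) with hK
  have hIA : (∫ ρ in Set.Ioo (0:ℝ) 1, ρ ^ (k+4) *
          (deriv (deriv (Vtest (k+5))) ρ + (((k+5:ℕ) : ℝ) - 1) * deriv (Vtest (k+5)) ρ / ρ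
            + 2 * (((k+5:ℕ) : ℝ) - 4) * Vtest (k+5) ρ / ρ ^ 2) ^ 2)
      = (4 + 8*K + 4*K^2) * Jr k (2*k+6)
        + (-(216 + 312*K + 104*K^2 + 8*K^3)) * Jr (k+2) (2*k+6)
        + (3444 + 3352*K + 1048*K^2 + 120*K^3 + 4*K^4) * Jr (k+4) (2*k+6)
        + (-(14256 + 12600*K + 3960*K^2 + 520*K^3 + 24*K^4)) * Jr (k+6) (2*k+6)
        + (17424 + 15312*K + 4948*K^2 + 696*K^3 + 36*K^4) * Jr (k+8) (2*k+6) := by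
    rw [setIntegral_congr_fun measurableSet_Ioo
      (g := fun ρ : ℝ => ∑ i ∈ Finset.range 5,
        qc K i * (ρ ^ (k + 2*i) * (1 - ρ ^ 2) ^ (2*k+6))) ?_]
    · rw [integral_finset_sum _ (fun i _ => ((intOn (k + 2*i) (2*k+6)).const_mul _))]
      simp only [Finset.sum_range_succ, Finset.sum_range_zero, integral_const_mul, qc, Jval,
        zero_add]
      norm_num
    · intro ρ hρ
      have hρ0 : ρ ≠ 0 := ne_of_gt hρ.1
      simp only [ddV (k+5) (k+3) rfl]
      simp only [dV (k+5) (k+4) rfl, Vtest, qc,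
        Finset.sum_range_succ, Finset.sum_range_zero, zero_add]
      push_cast
      field_simp
      ring
  have hIB : (∫ ρ in Set.Ioo (0:ℝ) 1, ρ ^ (k+4) * ((Vtest (k+5) ρ) ^ 2 / ρ ^ 4))
      = Jr k (2*k+10) := by
    rw [setIntegral_congr_fun measurableSet_Ioo
      (g := fun ρ : ℝ => ρ ^ k * (1 - ρ ^ 2) ^ (2*k+10)) ?_]
    · exact Jval (2*k+10) k
    · intro ρ hρ
      have hρ0 : ρ ≠ 0 := ne_of_gt hρ.1
      simp only [Vtest]
      field_simp
      ring
  rw [hIA, hIB]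
  have hCpos : 0 < C := by
    rw [hC]
    apply mul_pos
    · positivity
    · apply ENNReal.toReal_pos
      · exact (Metric.measure_ball_pos volume 0 one_pos).ne'
      · exact (measure_ball_lt_top).ne
  set X : ℝ := (4 + 8*K + 4*K^2) * Jr k (2*k+6)
        + (-(216 + 312*K + 104*K^2 + 8*K^3)) * Jr (k+2) (2*k+6)
        + (3444 + 3352*K + 1048*K^2 + 120*K^3 + 4*K^4) * Jr (k+4) (2*k+6)
        + (-(14256 + 12600*K + 3960*K^2 + 520*K^3 + 24*K^4)) * Jr (k+6) (2*k+6)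
        + (17424 + 15312*K + 4948*K^2 + 696*K^3 + 36*K^4) * Jr (k+8) (2*k+6) with hX
  have hfact : C * X - 5 * (((k+5:ℕ) : ℝ) - 1) * (((k+5:ℕ) : ℝ) + 11) * (C * Jr k (2*k+10))
      = C * (X - 5 * (((k+5:ℕ) : ℝ) - 1) * (((k+5:ℕ) : ℝ) + 11) * Jr k (2*k+10)) := by ring
  rw [hfact]
  apply mul_neg_of_pos_of_neg hCpos
  rw [hX, hK]
  have hk13 : k ≤ 13 := by omega
  interval_cases k <;> norm_num [Jr]
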